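/- If a group G admits subgroups G_i (i < κ) each of index at most κ with trivial intersection, then G admits a Hausdorff group topology (in fact a linear one) with a base of cardinality at most κ, where κ is an infinite cardinal. -/

import Mathlib

open Cardinal TopologicalSpace

universe u

/-- A topology on a group is a linear group topology if it is a group topology having
a neighbourhood base at the identity consisting of open subgroups. -/
def IsLinearGroupTopology {G : Type u} [Group G] (t : TopologicalSpace G) : Prop :=
  @IsTopologicalGroup G t _ ∧
    ∀ U ∈ @nhds G t 1, ∃ H : Subgroup G, @IsOpen G t (H : Set G) ∧ (H : Set G) ⊆ U

namespace ExistsLinearTopologyAux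

variable {G : Type u} [Group G]

/-- Conjugate of a subgroup. -/
def cj (g : G) (K : Subgroup G) : Subgroup G := K.map (MulAut.conj g).toMonoidHom

lemma mem_cj {g x : G} {K : Subgroup G} : x ∈ cj g K ↔ g⁻¹ * x * g ∈ K := by
  simp only [cj, Subgroup.mem_map, MulEquiv.coe_toMonoidHom, MulAut.conj_apply]
  constructor
  · rintro ⟨y, hy, rfl⟩
    rwa [show g⁻¹ * (g * y * g⁻¹) * g = y by group]
  · intro h
    exact ⟨g⁻¹ * x * g, h, by group⟩

lemma cj_cj (a b : G) (K : Subgroup G) : cj a (cj b K) = cj (a * b) K := by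
  ext x
  simp only [mem_cj, mul_inv_rev, mul_assoc]

lemma cj_one (K : Subgroup G) : cj 1 K = K := by
  ext x; simp [mem_cj]

lemma cj_inf (g : G) (K L : Subgroup G) : cj g (K ⊓ L) = cj g K ⊓ cj g L := by
  ext x; simp [mem_cj, Subgroup.mem_inf]

lemma cj_top (g : G) : cj g (⊤ : Subgroup G) = ⊤ := by
  ext x; simp [mem_cj]

lemma conj_mem_iff {K : Subgroup G} {k : G} (hk : k ∈ K) (y : G) :
    k⁻¹ * y * k ∈ K ↔ y ∈ K := by
  constructor
  · intro h
    have := K.mul_mem (K.mul_mem hk h) (K.inv_mem hk)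
    rwa [show k * (k⁻¹ * y * k) * k⁻¹ = y by group] at this
  · intro h
    exact K.mul_mem (K.mul_mem (K.inv_mem hk) h) hk

lemma cj_eq_of_mem {K : Subgroup G} {a b : G} (h : a⁻¹ * b ∈ K) : cj a K = cj b K := by
  ext x
  rw [mem_cj, mem_cj, show b⁻¹ * x * b = (a⁻¹ * b)⁻¹ * (a⁻¹ * x * a) * (a⁻¹ * b) by group,
    conj_mem_iff h]

/-- The quotient by a conjugate subgroup is equivalent to the quotient by the subgroup. -/
def quotCj (g : G) (K : Subgroup G) : G ⧸ K ≃ G ⧸ cj g K :=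
  Quotient.congr (MulAut.conj g).toEquiv fun a b => by
    rw [QuotientGroup.leftRel_apply, QuotientGroup.leftRel_apply, mem_cj]
    have : g⁻¹ * (((MulAut.conj g).toEquiv a)⁻¹ * (MulAut.conj g).toEquiv b) * g = a⁻¹ * b := by
      show g⁻¹ * ((MulAut.conj g a)⁻¹ * MulAut.conj g b) * g = a⁻¹ * b
      simp only [MulAut.conj_apply]
      group
    rw [this]

lemma mk_quot_cj (g : G) (K : Subgroup G) : #(G ⧸ cj g K) = #(G ⧸ K) :=
  (Cardinal.mk_congr (quotCj g K)).symm

/-- Embedding of the quotient by an intersection into the product of quotients. -/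
def quotInfEmb (K L : Subgroup G) : (G ⧸ (K ⊓ L)) ↪ (G ⧸ K) × (G ⧸ L) where
  toFun q := Quotient.liftOn' q (fun g => ((g : G ⧸ K), (g : G ⧸ L)))
    (fun a b hab => by
      have h := QuotientGroup.leftRel_apply.mp hab
      rw [Subgroup.mem_inf] at h
      exact Prod.ext_iff.mpr ⟨QuotientGroup.eq.mpr h.1, QuotientGroup.eq.mpr h.2⟩)
  inj' := by
    intro q₁ q₂
    refine Quotient.inductionOn₂' q₁ q₂ (fun a b h => ?_)
    have h1 : (a : G ⧸ K) = b := congrArg Prod.fst h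
    have h2 : (a : G ⧸ L) = b := congrArg Prod.snd h
    rw [QuotientGroup.eq] at h1 h2
    exact QuotientGroup.eq.mpr (Subgroup.mem_inf.mpr ⟨h1, h2⟩)

lemma mk_quot_inf_le (K L : Subgroup G) :
    #(G ⧸ (K ⊓ L)) ≤ #(G ⧸ K) * #(G ⧸ L) := by
  have := Cardinal.mk_le_of_injective (quotInfEmb K L).injective
  simpa using this

/-- Infimum of a list of subgroups. -/
def infl (l : List (Subgroup G)) : Subgroup G := l.foldr (· ⊓ ·) ⊤

lemma infl_nil : infl ([] : List (Subgroup G)) = ⊤ := rfl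

lemma infl_cons (K : Subgroup G) (l : List (Subgroup G)) : infl (K :: l) = K ⊓ infl l := rfl

lemma infl_singleton (K : Subgroup G) : infl [K] = K := by
  rw [infl_cons, infl_nil, inf_top_eq]

lemma infl_append (l₁ l₂ : List (Subgroup G)) : infl (l₁ ++ l₂) = infl l₁ ⊓ infl l₂ := by
  induction l₁ with
  | nil => simp [infl_nil]
  | cons a l ih => simp [infl_cons, ih, inf_assoc]

lemma cj_infl (g : G) (l : List (Subgroup G)) : cj g (infl l) = infl (l.map (cj g)) := by
  induction l with
  | nil => simp [infl_nil, cj_top]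
  | cons a l ih => simp [infl_cons, cj_inf, ih]

lemma mk_quot_infl_le {κ : Cardinal.{u}} (hκ : ℵ₀ ≤ κ) (l : List (Subgroup G))
    (h : ∀ K ∈ l, #(G ⧸ K) ≤ κ) : #(G ⧸ infl l) ≤ κ := by
  induction l with
  | nil =>
    rw [infl_nil]
    haveI := QuotientGroup.subsingleton_quotient_top (G := G)
    exact le_trans (Cardinal.le_one_iff_subsingleton.mpr this) (le_trans one_le_aleph0 hκ)
  | cons a l ih =>
    rw [infl_cons]
    calc #(G ⧸ (a ⊓ infl l)) ≤ #(G ⧸ a) * #(G ⧸ infl l) := mk_quot_inf_le _ _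
      _ ≤ κ * κ := mul_le_mul' (h a List.mem_cons_self)
          (ih fun K hK => h K (List.mem_cons_of_mem a hK))
      _ = κ := Cardinal.mul_eq_self hκ

/-- The group filter basis associated to a conjugation- and intersection-closed
family of subgroups. -/
def gfb (S : Set (Subgroup G)) (hne : S.Nonempty)
    (hinf : ∀ ⦃V₁⦄, V₁ ∈ S → ∀ ⦃V₂⦄, V₂ ∈ S → V₁ ⊓ V₂ ∈ S)
    (hconj : ∀ (g : G) ⦃V⦄, V ∈ S → cj g V ∈ S) : GroupFilterBasis G where
  sets := (fun V : Subgroup G => (V : Set G)) '' S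
  nonempty := ⟨_, ⟨hne.choose, hne.choose_spec, rfl⟩⟩
  inter_sets := by
    rintro _ _ ⟨V₁, h₁, rfl⟩ ⟨V₂, h₂, rfl⟩
    refine ⟨_, ⟨V₁ ⊓ V₂, hinf h₁ h₂, rfl⟩, ?_⟩
    intro x hx
    rw [SetLike.mem_coe, Subgroup.mem_inf] at hx
    exact ⟨hx.1, hx.2⟩
  one' := by
    rintro _ ⟨V, hV, rfl⟩
    exact V.one_mem
  mul' := by
    rintro _ ⟨V, hV, rfl⟩
    refine ⟨_, ⟨V, hV, rfl⟩, ?_⟩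
    rintro x hx
    rw [Set.mem_mul] at hx
    obtain ⟨a, ha, b, hb, rfl⟩ := hx
    exact V.mul_mem ha hb
  inv' := by
    rintro _ ⟨V, hV, rfl⟩
    exact ⟨_, ⟨V, hV, rfl⟩, fun x hx => V.inv_mem hx⟩
  conj' := by
    rintro x₀ _ ⟨V, hV, rfl⟩
    refine ⟨_, ⟨cj x₀⁻¹ V, hconj _ hV, rfl⟩, fun x hx => ?_⟩
    have h := mem_cj.mp hx
    simpa using h

end ExistsLinearTopologyAux

open ExistsLinearTopologyAux

/-- If a group `G` admits subgroups `G i` (`i < κ`), each of index at most `κ`, with trivial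
intersection (`κ` an infinite cardinal), then `G` admits a Hausdorff linear group topology
with a base of cardinality at most `κ`. -/
theorem exists_linear_topology_of_subgroups (G : Type u) [Group G] (κ : Cardinal.{u})
    (hκ : ℵ₀ ≤ κ) (H : κ.ord.ToType → Subgroup G)
    (hind : ∀ i, #(G ⧸ H i) ≤ κ) (hinter : (⨅ i, H i) = ⊥) :
    ∃ t : TopologicalSpace G, IsLinearGroupTopology t ∧ @T2Space G t ∧
      ∃ B : Set (Set G), @TopologicalSpace.IsTopologicalBasis G t B ∧ #B ≤ κ := by
  classical
  have hκ0 : κ ≠ 0 := fun h => by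
    rw [h] at hκ; exact (Cardinal.aleph0_pos.trans_le hκ).ne' rfl
  haveI hι : Nonempty κ.ord.ToType := by
    rw [Ordinal.toType_nonempty_iff_ne_zero]
    intro h
    exact hκ0 (by rw [← Cardinal.card_ord κ, h, Ordinal.card_zero])
  -- the family of all conjugates of the `H i`
  set C : Set (Subgroup G) := {K | ∃ i g, K = cj g (H i)} with hC
  -- the family of finite intersections of elements of `C`
  set S : Set (Subgroup G) :=
    {V | ∃ l : List (Subgroup G), l ≠ [] ∧ (∀ K ∈ l, K ∈ C) ∧ V = infl l} with hS
  have hHC : ∀ i, H i ∈ C := fun i => ⟨i, 1, (cj_one _).symm⟩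
  have hCcj : ∀ (g : G), ∀ K ∈ C, cj g K ∈ C := by
    rintro g K ⟨i, a, rfl⟩
    exact ⟨i, g * a, cj_cj g a (H i)⟩
  have hCcard : ∀ K ∈ C, #(G ⧸ K) ≤ κ := by
    rintro K ⟨i, g, rfl⟩
    rw [mk_quot_cj]
    exact hind i
  have hHS : ∀ i, H i ∈ S :=
    fun i => ⟨[H i], by simp, by simpa using hHC i, (infl_singleton _).symm⟩
  have hSne : S.Nonempty := ⟨H (Classical.arbitrary _), hHS _⟩
  have hSinf : ∀ ⦃V₁⦄, V₁ ∈ S → ∀ ⦃V₂⦄, V₂ ∈ S → V₁ ⊓ V₂ ∈ S := by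
    rintro _ ⟨l₁, h₁, hc₁, rfl⟩ _ ⟨l₂, h₂, hc₂, rfl⟩
    refine ⟨l₁ ++ l₂, by simp [h₁], ?_, (infl_append l₁ l₂).symm⟩
    intro K hK
    rcases List.mem_append.mp hK with h | h
    · exact hc₁ K h
    · exact hc₂ K h
  have hScj : ∀ (g : G), ∀ ⦃V⦄, V ∈ S → cj g V ∈ S := by
    rintro g _ ⟨l, h, hc, rfl⟩
    refine ⟨l.map (cj g), by simp [h], ?_, cj_infl g l⟩
    intro K hK
    rw [List.mem_map] at hK
    obtain ⟨a, ha, rfl⟩ := hK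
    exact hCcj g a (hc a ha)
  have hScard : ∀ V ∈ S, #(G ⧸ V) ≤ κ := by
    rintro _ ⟨l, h, hc, rfl⟩
    exact mk_quot_infl_le hκ l fun K hK => hCcard K (hc K hK)
  -- cardinality of C
  have hCk : #C ≤ κ := by
    set f : (Σ i : κ.ord.ToType, G ⧸ H i) → Subgroup G :=
      fun p => Quotient.liftOn' p.2 (fun g => cj g (H p.1))
        (fun a b hab => cj_eq_of_mem (QuotientGroup.leftRel_apply.mp hab)) with hf
    have hCr : C ⊆ Set.range f := by
      rintro K ⟨i, g, rfl⟩
      exact ⟨⟨i, QuotientGroup.mk g⟩, rfl⟩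
    calc #C ≤ #(Set.range f) := Cardinal.mk_le_mk_of_subset hCr
      _ ≤ #(Σ i : κ.ord.ToType, G ⧸ H i) := Cardinal.mk_range_le
      _ = Cardinal.sum (fun i => #(G ⧸ H i)) := Cardinal.mk_sigma _
      _ ≤ Cardinal.sum (fun _ : κ.ord.ToType => κ) := Cardinal.sum_le_sum _ _ hind
      _ = #(κ.ord.ToType) * κ := Cardinal.sum_const' _ _
      _ = κ * κ := by rw [Cardinal.mk_ord_toType]
      _ = κ := Cardinal.mul_eq_self hκ
  -- cardinality of S
  have hSk : #S ≤ κ := by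
    set g : List C → Subgroup G := fun l => infl (l.map Subtype.val) with hg
    have hSr : S ⊆ Set.range g := by
      rintro _ ⟨l, h, hc, rfl⟩
      refine ⟨l.attach.map (fun x => ⟨x.1, hc x.1 x.2⟩), ?_⟩
      show infl _ = infl l
      rw [List.map_map]
      congr 1
      exact l.attach_map_subtype_val
    calc #S ≤ #(Set.range g) := Cardinal.mk_le_mk_of_subset hSr
      _ ≤ #(List C) := Cardinal.mk_range_le
      _ ≤ max ℵ₀ #C := Cardinal.mk_list_le_max _
      _ ≤ κ := max_le hκ hCk
  -- the topology
  set B : GroupFilterBasis G := gfb S hSne hSinf hScj with hB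
  refine ⟨B.topology, ⟨B.isTopologicalGroup, ?_⟩, ?_, ?_⟩
  · -- linear
    letI := B.topology
    haveI : IsTopologicalGroup G := B.isTopologicalGroup
    intro U hU
    obtain ⟨W, hW, hWU⟩ := B.nhds_one_hasBasis.mem_iff.mp hU
    obtain ⟨V, hVS, rfl⟩ := hW
    exact ⟨V, Subgroup.isOpen_of_mem_nhds V (B.mem_nhds_one ⟨V, hVS, rfl⟩), hWU⟩
  · -- T2
    letI := B.topology
    haveI : IsTopologicalGroup G := B.isTopologicalGroup
    apply IsTopologicalGroup.t2Space_of_one_sep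
    intro x hx
    have hxi : ∃ i, x ∉ H i := by
      by_contra h
      push_neg at h
      exact hx (Subgroup.mem_bot.mp (hinter ▸ Subgroup.mem_iInf.mpr h))
    obtain ⟨i, hi⟩ := hxi
    exact ⟨(H i : Set G), B.mem_nhds_one ⟨H i, hHS i, rfl⟩, hi⟩
  · -- basis
    letI := B.topology
    haveI : IsTopologicalGroup G := B.isTopologicalGroup
    set Bset : Set (Set G) :=
      {U : Set G | ∃ V ∈ S, ∃ g : G, U = (fun x => g⁻¹ * x) ⁻¹' (V : Set G)} with hBset
    have hopenV : ∀ V ∈ S, IsOpen (V : Set G) := fun V hV =>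
      Subgroup.isOpen_of_mem_nhds V (B.mem_nhds_one ⟨V, hV, rfl⟩)
    refine ⟨Bset, ?_, ?_⟩
    · apply TopologicalSpace.isTopologicalBasis_of_isOpen_of_nhds
      · rintro U ⟨V, hV, g, rfl⟩
        exact (hopenV V hV).preimage (continuous_const.mul continuous_id)
      · intro a U haU hUopen
        have hU : U ∈ nhds a := hUopen.mem_nhds haU
        rw [← map_mul_left_nhds_one a] at hU
        have hU' : (fun x => a * x) ⁻¹' U ∈ nhds (1 : G) := hU
        obtain ⟨W, hW, hsub⟩ := B.nhds_one_hasBasis.mem_iff.mp hU'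
        obtain ⟨V, hVS, rfl⟩ := hW
        refine ⟨(fun x => a⁻¹ * x) ⁻¹' (V : Set G), ⟨V, hVS, a, rfl⟩, ?_, ?_⟩
        · show a⁻¹ * a ∈ (V : Set G)
          simp [V.one_mem]
        · intro x hx
          have h2 := hsub hx
          simpa using h2
    · -- cardinality of the basis
      set F : (Σ V : S, G ⧸ (V : Subgroup G)) → Set G := fun p =>
        Quotient.liftOn' p.2 (fun g => (fun x => g⁻¹ * x) ⁻¹' ((p.1 : Subgroup G) : Set G))
          (fun a b hab => by
            have h := QuotientGroup.leftRel_apply.mp hab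
            ext x
            simp only [Set.mem_preimage, SetLike.mem_coe]
            rw [show b⁻¹ * x = (a⁻¹ * b)⁻¹ * (a⁻¹ * x) by group]
            exact (mul_mem_cancel_left ((p.1 : Subgroup G).inv_mem h)).symm) with hF
      have hBr : Bset ⊆ Set.range F := by
        rintro _ ⟨V, hV, g, rfl⟩
        exact ⟨⟨⟨V, hV⟩, QuotientGroup.mk g⟩, rfl⟩
      calc #Bset ≤ #(Set.range F) := Cardinal.mk_le_mk_of_subset hBr
        _ ≤ #(Σ V : S, G ⧸ (V : Subgroup G)) := Cardinal.mk_range_le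
        _ = Cardinal.sum (fun V : S => #(G ⧸ (V : Subgroup G))) := Cardinal.mk_sigma _
        _ ≤ Cardinal.sum (fun _ : S => κ) :=
            Cardinal.sum_le_sum _ _ (fun V => hScard V V.2)
        _ = #S * κ := Cardinal.sum_const' _ _
        _ ≤ κ * κ := mul_le_mul_left hSk κ
        _ = κ := Cardinal.mul_eq_self hκ
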